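/- Consider minimizing $\sum_{i=1}^M (w_i/a_i + w_i)$ over $a_i > 0$ subject to $a_l \leq b_l$ for all $l$ and $\sum_{i=1}^M a_i \leq 1$, where $w_i, b_i > 0$. If $\sum_{i=1}^M b_i \geq 1$, the optimal solution is $a_l^\star = \min\{b_l, \beta^\star\sqrt{w_l}\}$, where $\beta^\star$ is the unique root of $\sum_{i=1}^M \min\{b_i, \beta^\star\sqrt{w_i}\} = 1$, and the optimal value is $\sum_{i=1}^M [w_i/\min\{b_i,\beta^\star\sqrt{w_i}\} + w_i]$. -/

import Mathlib

theorem stmt_13 (M : ℕ) (w b : Fin M → ℝ)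
    (hw : ∀ i, 0 < w i) (hb : ∀ i, 0 < b i) (hsum : 1 ≤ ∑ i, b i)
    (β : ℝ) (hβ : ∑ i, min (b i) (β * Real.sqrt (w i)) = 1) :
    (∀ l, 0 < min (b l) (β * Real.sqrt (w l))) ∧
    (∀ l, min (b l) (β * Real.sqrt (w l)) ≤ b l) ∧
    (∑ i, min (b i) (β * Real.sqrt (w i))) ≤ 1 ∧
    (∀ a : Fin M → ℝ, (∀ i, 0 < a i) → (∀ l, a l ≤ b l) → (∑ i, a i) ≤ 1 →
      ∑ i, (w i / min (b i) (β * Real.sqrt (w i)) + w i) ≤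
        ∑ i, (w i / a i + w i)) := by
  have hβpos : 0 < β := by
    by_contra h
    push_neg at h
    have : (∑ i, min (b i) (β * Real.sqrt (w i))) ≤ 0 := by
      apply Finset.sum_nonpos
      intro i _
      have : β * Real.sqrt (w i) ≤ 0 :=
        mul_nonpos_of_nonpos_of_nonneg h (Real.sqrt_nonneg _)
      exact le_trans (min_le_right _ _) this
    linarith
  have hpos : ∀ l, 0 < min (b l) (β * Real.sqrt (w l)) := by
    intro l
    apply lt_min (hb l)
    exact mul_pos hβpos (Real.sqrt_pos.mpr (hw l))
  refine ⟨hpos, fun l => min_le_left _ _, le_of_eq hβ, ?_⟩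
  intro a ha hab hasum
  -- per-term inequality
  have key : ∀ i : Fin M, w i / min (b i) (β * Real.sqrt (w i)) ≤
      w i / a i + (1/β^2) * (a i - min (b i) (β * Real.sqrt (w i))) := by
    intro i
    set s := Real.sqrt (w i) with hs
    have hspos : 0 < s := Real.sqrt_pos.mpr (hw i)
    have hws : w i = s ^ 2 := (Real.sq_sqrt (hw i).le).symm
    have hai := ha i
    have habi := hab i
    have hbi := hb i
    rcases le_or_gt (β * s) (b i) with hcase | hcase
    · rw [min_eq_right hcase, hws]
      have hβne : β ≠ 0 := ne_of_gt hβpos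
      have h1 : s ^ 2 / (β * s) = s / β := by
        field_simp
      rw [h1, ← sub_le_iff_le_add, le_div_iff₀ hai]
      have hβ2 : (0:ℝ) < β ^ 2 := by positivity
      have e : (s / β - 1 / β ^ 2 * (a i - β * s)) * a i
          = (s * β - (a i - β * s)) * a i / β ^ 2 := by
        field_simp
      rw [e, div_le_iff₀ hβ2]
      nlinarith [sq_nonneg (s * β - a i)]
    · rw [min_eq_left hcase.le, hws]
      have hβne : β ≠ 0 := ne_of_gt hβpos
      have hβ2 : (0:ℝ) < β ^ 2 := by positivity
      rw [← sub_le_iff_le_add, le_div_iff₀ hai]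
      have e : (s ^ 2 / b i - 1 / β ^ 2 * (a i - b i)) * a i
          = (s ^ 2 * β ^ 2 - (a i - b i) * b i) * a i / (b i * β ^ 2) := by
        field_simp
      rw [e, div_le_iff₀ (by positivity : (0:ℝ) < b i * β ^ 2)]
      -- need (s²β² - (a-b)b) a ≤ s² b β², i.e. (a-b)(s²β² - a b) ≤ 0
      have h3 : a i * b i ≤ s ^ 2 * β ^ 2 := by
        nlinarith [mul_pos hβpos hspos]
      nlinarith [mul_nonneg (sub_nonneg.mpr habi) (sub_nonneg.mpr h3)]
  calc ∑ i, (w i / min (b i) (β * Real.sqrt (w i)) + w i)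
      ≤ ∑ i, (w i / a i + (1/β^2) * (a i - min (b i) (β * Real.sqrt (w i))) + w i) := by
        apply Finset.sum_le_sum
        intro i _
        have := key i
        linarith
    _ = ∑ i, (w i / a i + w i) + (1/β^2) * ((∑ i, a i) - ∑ i, min (b i) (β * Real.sqrt (w i))) := by
        simp only [Finset.sum_add_distrib, Finset.mul_sum, mul_sub, Finset.sum_sub_distrib]
        ring
    _ ≤ ∑ i, (w i / a i + w i) := by
        rw [hβ]
        have h0 : (∑ i, a i) - 1 ≤ 0 := by linarith
        have := mul_nonpos_of_nonneg_of_nonpos (by positivity : (0:ℝ) ≤ 1/β^2) h0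
        linarith
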